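/- For a standard normal random variable Z and reals t > 0, s ≥ 1/t, one has P(Z > t + s) ≤ P(Z > t)/2. -/

import Mathlib

open MeasureTheory ProbabilityTheory Set

theorem stmt_8 (t s : ℝ) (ht : 0 < t) (hs : 1 / t ≤ s) :
    gaussianReal 0 1 (Ioi (t + s)) ≤ gaussianReal 0 1 (Ioi t) / 2 := by
  have hs0 : 0 < s := lt_of_lt_of_le (by positivity) hs
  have hts : 1 ≤ t * s := by
    rw [div_le_iff₀ ht] at hs
    linarith [hs]
  rw [gaussianReal_apply _ one_ne_zero, gaussianReal_apply _ one_ne_zero]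
  have htrans : ∫⁻ x in Ioi (t + s), gaussianPDF 0 1 x
      = ∫⁻ x in Ioi t, gaussianPDF 0 1 (x + s) := by
    have hmap : Measure.map (· + s) (volume : Measure ℝ) = volume :=
      map_add_right_eq_self volume s
    calc ∫⁻ x in Ioi (t + s), gaussianPDF 0 1 x
        = ∫⁻ x in Ioi (t + s), gaussianPDF 0 1 x ∂(Measure.map (· + s) volume) := by
          rw [hmap]
      _ = ∫⁻ x in (· + s) ⁻¹' Ioi (t + s), gaussianPDF 0 1 (x + s) := by
          rw [setLIntegral_map measurableSet_Ioi (measurable_gaussianPDF 0 1)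
            (measurable_add_const s)]
      _ = ∫⁻ x in Ioi t, gaussianPDF 0 1 (x + s) := by
          congr 1
          ext x
          simp [add_lt_add_iff_right]
  rw [htrans]
  have hpt : ∀ x ∈ Ioi t, gaussianPDF 0 1 (x + s) ≤ 2⁻¹ * gaussianPDF 0 1 x := by
    intro x hx
    simp only [mem_Ioi] at hx
    have hkey : gaussianPDFReal 0 1 (x + s) ≤ 2⁻¹ * gaussianPDFReal 0 1 x := by
      simp only [gaussianPDFReal, NNReal.coe_one, mul_one, sub_zero]
      rw [mul_left_comm]
      apply mul_le_mul_of_nonneg_left _ (by positivity)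
      have h1 : -(x + s)^2 / 2 = -x^2 / 2 + (-(x * s + s^2/2)) := by ring
      rw [h1, Real.exp_add, mul_comm (2⁻¹:ℝ)]
      apply mul_le_mul_of_nonneg_left _ (Real.exp_pos _).le
      have h2 : (1:ℝ) ≤ x * s + s^2/2 := by nlinarith
      have h3 : Real.exp (-(x * s + s^2/2)) ≤ Real.exp (-1) := by
        apply Real.exp_le_exp.mpr; linarith
      refine h3.trans ?_
      rw [Real.exp_neg, inv_le_inv₀ (Real.exp_pos 1) (by norm_num)]
      linarith [Real.add_one_le_exp (1:ℝ)]
    have h2inv : ENNReal.ofReal (2⁻¹:ℝ) = (2:ENNReal)⁻¹ := by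
      rw [ENNReal.ofReal_inv_of_pos (by norm_num)]
      norm_num
    calc gaussianPDF 0 1 (x + s) = ENNReal.ofReal (gaussianPDFReal 0 1 (x + s)) := rfl
      _ ≤ ENNReal.ofReal (2⁻¹ * gaussianPDFReal 0 1 x) := ENNReal.ofReal_le_ofReal hkey
      _ = 2⁻¹ * gaussianPDF 0 1 x := by
          rw [ENNReal.ofReal_mul (by norm_num), h2inv]
          rfl
  calc ∫⁻ x in Ioi t, gaussianPDF 0 1 (x + s)
      ≤ ∫⁻ x in Ioi t, 2⁻¹ * gaussianPDF 0 1 x :=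
        setLIntegral_mono ((measurable_gaussianPDF 0 1).const_mul _) hpt
    _ = 2⁻¹ * ∫⁻ x in Ioi t, gaussianPDF 0 1 x :=
        lintegral_const_mul _ (measurable_gaussianPDF 0 1)
    _ = (∫⁻ x in Ioi t, gaussianPDF 0 1 x) / 2 := by
        rw [ENNReal.div_eq_inv_mul]
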